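/- For all real numbers a, b, c, k, the matrix 1 - k•U₃(a,b,c) is invertible, and the Cayley transform satisfies (1 - k•U₃)⁻¹ * (1 + k•U₃) = 1 + (2/(1 + k²(a² + b² + c²))) • (k•U₃ + k²•U₃²). -/

import Mathlib

set_option maxHeartbeats 1000000

/-- The 3×3 real antisymmetric matrix `U₃(a,b,c)`. -/
def U₃ (a b c : ℝ) : Matrix (Fin 3) (Fin 3) ℝ := !![0, -c, b; c, 0, -a; -b, a, 0]

/-- For all real `a, b, c, k`, the matrix `1 - k•U₃(a,b,c)` is invertible, and the Cayley
transform satisfies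
`(1 - k•U₃)⁻¹ * (1 + k•U₃) = 1 + (2/(1 + k²(a² + b² + c²))) • (k•U₃ + k²•U₃²)`. -/
theorem cayley_U₃_formula (a b c k : ℝ) :
    IsUnit (1 - k • U₃ a b c) ∧
    (1 - k • U₃ a b c)⁻¹ * (1 + k • U₃ a b c)
      = 1 + (2 / (1 + k ^ 2 * (a ^ 2 + b ^ 2 + c ^ 2))) •
          (k • U₃ a b c + k ^ 2 • (U₃ a b c) ^ 2) := by
  have hd : (1 : ℝ) + k ^ 2 * (a ^ 2 + b ^ 2 + c ^ 2) ≠ 0 := by positivity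
  have hdet : (1 - k • U₃ a b c).det = 1 + k ^ 2 * (a ^ 2 + b ^ 2 + c ^ 2) := by
    simp [U₃, Matrix.det_fin_three, Matrix.smul_apply, Matrix.one_apply]; ring
  have hunit : IsUnit (1 - k • U₃ a b c) := by
    rw [Matrix.isUnit_iff_isUnit_det, hdet]
    exact hd.isUnit
  refine ⟨hunit, ?_⟩
  have hU2 : (U₃ a b c) ^ 2 =
      !![-(b^2+c^2), a*b, a*c; a*b, -(a^2+c^2), b*c; a*c, b*c, -(a^2+b^2)] := by
    rw [sq]
    simp [U₃, Matrix.mul_fin_three]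
    ring_nf
    simp
  have hmul : (1 - k • U₃ a b c) *
      (1 + (2 / (1 + k ^ 2 * (a ^ 2 + b ^ 2 + c ^ 2))) •
        (k • U₃ a b c + k ^ 2 • (U₃ a b c) ^ 2)) = 1 + k • U₃ a b c := by
    rw [hU2]
    ext i j
    fin_cases i <;> fin_cases j <;>
      · simp [U₃, Matrix.mul_apply, Fin.sum_univ_three, Matrix.one_apply]
        field_simp
        ring
  calc (1 - k • U₃ a b c)⁻¹ * (1 + k • U₃ a b c)
      = (1 - k • U₃ a b c)⁻¹ * ((1 - k • U₃ a b c) *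
        (1 + (2 / (1 + k ^ 2 * (a ^ 2 + b ^ 2 + c ^ 2))) •
          (k • U₃ a b c + k ^ 2 • (U₃ a b c) ^ 2))) := by rw [hmul]
    _ = _ := by
        rw [← Matrix.mul_assoc,
          Matrix.nonsing_inv_mul _ (by rw [hdet]; exact hd.isUnit), one_mul]
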